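/- Let (X, μ) be a measure space, 1 ≤ p < n, q = np/(n-p), and suppose u is a nonnegative measurable function such that for some constant C > 0 and every integer k, the truncation u_k = min(max(u-2^k,0), 2^k) satisfies λ^q μ({u_k ≥ λ}) ≤ C E(u_k)^{q/p} for all λ > 0, where E is a functional with ∑_k E(u_k) ≤ E(u). Then ∫ u^q dμ ≤ (np/(n-p)) · 2^{(2np+p-n)/(n-p)} · C · E(u)^{q/p}. -/

import Mathlib

open MeasureTheory
open scoped ENNReal

theorem tsum_rpow_le_rpow_tsum' {ι : Type*} [Countable ι] (a : ι → ℝ≥0∞) {r : ℝ} (hr : 1 ≤ r) :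
    ∑' i, (a i) ^ r ≤ (∑' i, a i) ^ r := by
  set S := ∑' i, a i with hS
  by_cases hStop : S = ∞
  · rw [hStop, ENNReal.top_rpow_of_pos (by linarith)]
    exact le_top
  have key : ∀ i, (a i) ^ r ≤ S ^ (r - 1) * a i := by
    intro i
    by_cases h0 : a i = 0
    · simp [h0, ENNReal.zero_rpow_of_pos (by linarith : (0:ℝ) < r)]
    have hle : a i ≤ S := ENNReal.le_tsum i
    have hne : a i ≠ ∞ := (lt_of_le_of_lt hle (lt_top_iff_ne_top.2 hStop)).ne
    calc (a i) ^ r = (a i) ^ (r - 1) * (a i) ^ (1:ℝ) := by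
          rw [← ENNReal.rpow_add _ _ h0 hne]; norm_num
      _ = (a i) ^ (r - 1) * a i := by rw [ENNReal.rpow_one]
      _ ≤ S ^ (r - 1) * a i :=
          mul_le_mul_left (ENNReal.rpow_le_rpow hle (by linarith)) _
  calc ∑' i, (a i) ^ r ≤ ∑' i, S ^ (r - 1) * a i := ENNReal.tsum_le_tsum key
    _ = S ^ (r - 1) * S := by rw [ENNReal.tsum_mul_left]
    _ = S ^ r := by
        by_cases hS0 : S = 0
        · simp [hS0, ENNReal.zero_rpow_of_pos (by linarith : (0:ℝ) < r)]
        · calc S ^ (r-1) * S = S ^ (r-1) * S ^ (1:ℝ) := by rw [ENNReal.rpow_one]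
            _ = S ^ r := by rw [← ENNReal.rpow_add _ _ hS0 hStop]; norm_num

theorem stmt_4 {X : Type*} [MeasurableSpace X] (μ : Measure X)
    (u : X → ℝ) (hu : Measurable u) (hu0 : ∀ x, 0 ≤ u x)
    (n p : ℝ) (hp : 1 ≤ p) (hpn : p < n)
    (C : ℝ) (hC : 0 < C) (E : (X → ℝ) → ℝ≥0∞)
    (hweak : ∀ k : ℤ, ∀ lam : ℝ, 0 < lam →
      ENNReal.ofReal (lam ^ (n * p / (n - p))) *
          μ {x | lam ≤ min (max (u x - 2 ^ k) 0) (2 ^ k)}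
        ≤ ENNReal.ofReal C *
            (E (fun x => min (max (u x - 2 ^ k) 0) (2 ^ k))) ^ ((n * p / (n - p)) / p))
    (hsub : ∑' k : ℤ, E (fun x => min (max (u x - 2 ^ k) 0) (2 ^ k)) ≤ E u) :
    ∫⁻ x, ENNReal.ofReal (u x ^ (n * p / (n - p))) ∂μ
      ≤ ENNReal.ofReal (n * p / (n - p) * 2 ^ ((2 * n * p + p - n) / (n - p)) * C) *
          (E u) ^ ((n * p / (n - p)) / p) := by
  have hnp : (0:ℝ) < n - p := by linarith
  have hp0 : (0:ℝ) < p := by linarith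
  set q := n * p / (n - p) with hq
  have hq1 : 1 ≤ q := by
    rw [hq, le_div_iff₀ hnp]; nlinarith
  have hq0 : (0:ℝ) < q := lt_of_lt_of_le one_pos hq1
  have hr1 : 1 ≤ q / p := by
    rw [hq, div_div, le_div_iff₀ (by positivity)]; nlinarith
  have hr0 : (0:ℝ) ≤ q / p := by positivity
  set F : ℤ → ℝ≥0∞ := fun k => E (fun x => min (max (u x - 2 ^ k) 0) (2 ^ k)) with hF
  have hsub' : ∑' k : ℤ, F k ≤ E u := hsub
  -- layer cake
  rw [lintegral_rpow_eq_lintegral_meas_le_mul μ (Filter.Eventually.of_forall hu0)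
    hu.aemeasurable hq0]
  -- dyadic cover of (0, ∞)
  have cover : Set.Ioi (0:ℝ) ⊆ ⋃ k : ℤ, Set.Ico ((2:ℝ)^k) ((2:ℝ)^(k+1)) := by
    intro t ht
    obtain ⟨k, hk⟩ := exists_mem_Ico_zpow (Set.mem_Ioi.mp ht) one_lt_two
    exact Set.mem_iUnion.2 ⟨k, hk⟩
  have step1 : ∫⁻ t in Set.Ioi (0:ℝ), μ {a | t ≤ u a} * ENNReal.ofReal (t ^ (q-1))
      ≤ ∑' k : ℤ, ∫⁻ t in Set.Ico ((2:ℝ)^k) ((2:ℝ)^(k+1)),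
          μ {a | t ≤ u a} * ENNReal.ofReal (t ^ (q-1)) :=
    le_trans (lintegral_mono_set cover) (lintegral_iUnion_le _ _)
  -- per-piece bound
  have hper : ∀ k : ℤ, ∫⁻ t in Set.Ico ((2:ℝ)^k) ((2:ℝ)^(k+1)),
      μ {a | t ≤ u a} * ENNReal.ofReal (t ^ (q-1))
      ≤ ENNReal.ofReal (2 ^ (2*q-1) * C) * (F (k-1)) ^ (q / p) := by
    intro k
    have h2k : (2:ℝ)^(k-1) + (2:ℝ)^(k-1) = (2:ℝ)^k := by
      have := zpow_add_one₀ (two_ne_zero (α := ℝ)) (k-1)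
      simp only [sub_add_cancel] at this
      rw [this]; ring
    have hpos : (0:ℝ) < (2:ℝ)^(k-1) := zpow_pos (by norm_num) _
    set Mk := μ {x | (2:ℝ)^(k-1) ≤ min (max (u x - 2 ^ (k-1)) 0) (2 ^ (k-1))} with hMk
    have hsubset : ∀ t ∈ Set.Ico ((2:ℝ)^k) ((2:ℝ)^(k+1)),
        {a | t ≤ u a} ⊆ {x | (2:ℝ)^(k-1) ≤ min (max (u x - 2 ^ (k-1)) 0) (2 ^ (k-1))} := by
      intro t ht a ha
      have hua : (2:ℝ)^k ≤ u a := le_trans ht.1 ha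
      have h1 : (2:ℝ)^(k-1) ≤ u a - 2^(k-1) := by linarith
      exact le_min (le_max_of_le_left h1) le_rfl
    have hbnd : ∀ t ∈ Set.Ico ((2:ℝ)^k) ((2:ℝ)^(k+1)),
        μ {a | t ≤ u a} * ENNReal.ofReal (t ^ (q-1))
          ≤ Mk * ENNReal.ofReal (((2:ℝ)^(k+1)) ^ (q-1)) := by
      intro t ht
      refine mul_le_mul' (measure_mono (hsubset t ht)) (ENNReal.ofReal_le_ofReal ?_)
      have ht0 : (0:ℝ) ≤ t := le_trans (by positivity) ht.1
      exact Real.rpow_le_rpow ht0 ht.2.le (by linarith)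
    calc ∫⁻ t in Set.Ico ((2:ℝ)^k) ((2:ℝ)^(k+1)),
          μ {a | t ≤ u a} * ENNReal.ofReal (t ^ (q-1))
        ≤ ∫⁻ _ in Set.Ico ((2:ℝ)^k) ((2:ℝ)^(k+1)),
            Mk * ENNReal.ofReal (((2:ℝ)^(k+1)) ^ (q-1)) :=
          setLIntegral_mono measurable_const hbnd
      _ = Mk * ENNReal.ofReal (((2:ℝ)^(k+1)) ^ (q-1)) * ENNReal.ofReal ((2:ℝ)^k) := by
          rw [setLIntegral_const, Real.volume_Ico]
          congr 1
          congr 1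
          have := zpow_add_one₀ (two_ne_zero (α := ℝ)) k
          rw [this]; ring
      _ = ENNReal.ofReal (2 ^ (2*q-1)) *
            (ENNReal.ofReal (((2:ℝ)^(k-1)) ^ q) * Mk) := by
          rw [mul_assoc, ← ENNReal.ofReal_mul (by positivity)]
          rw [show ((2:ℝ)^(k+1)) ^ (q-1) * (2:ℝ)^k
              = 2 ^ (2*q-1) * ((2:ℝ)^(k-1)) ^ q by
            rw [show ((2:ℝ)^(k+1)) = (2:ℝ)^(((k+1:ℤ)):ℝ) from (Real.rpow_intCast 2 (k+1)).symm,
              show ((2:ℝ)^k) = (2:ℝ)^((k:ℤ):ℝ) from (Real.rpow_intCast 2 k).symm,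
              show ((2:ℝ)^(k-1)) = (2:ℝ)^(((k-1:ℤ)):ℝ) from (Real.rpow_intCast 2 (k-1)).symm,
              ← Real.rpow_mul (by norm_num : (0:ℝ) ≤ 2),
              ← Real.rpow_mul (by norm_num : (0:ℝ) ≤ 2),
              ← Real.rpow_add (by norm_num : (0:ℝ) < 2),
              ← Real.rpow_add (by norm_num : (0:ℝ) < 2)]
            congr 1
            push_cast
            ring]
          rw [ENNReal.ofReal_mul (by positivity)]
          ring
      _ ≤ ENNReal.ofReal (2 ^ (2*q-1)) * (ENNReal.ofReal C * (F (k-1)) ^ (q / p)) :=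
          mul_le_mul_right (hweak (k-1) ((2:ℝ)^(k-1)) hpos) _
      _ = ENNReal.ofReal (2 ^ (2*q-1) * C) * (F (k-1)) ^ (q / p) := by
          rw [ENNReal.ofReal_mul (by positivity), mul_assoc]
  -- sum up
  have step2 : ∑' k : ℤ, ∫⁻ t in Set.Ico ((2:ℝ)^k) ((2:ℝ)^(k+1)),
        μ {a | t ≤ u a} * ENNReal.ofReal (t ^ (q-1))
      ≤ ENNReal.ofReal (2 ^ (2*q-1) * C) * (E u) ^ (q / p) := by
    calc ∑' k : ℤ, ∫⁻ t in Set.Ico ((2:ℝ)^k) ((2:ℝ)^(k+1)),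
          μ {a | t ≤ u a} * ENNReal.ofReal (t ^ (q-1))
        ≤ ∑' k : ℤ, ENNReal.ofReal (2 ^ (2*q-1) * C) * (F (k-1)) ^ (q / p) :=
          ENNReal.tsum_le_tsum hper
      _ = ENNReal.ofReal (2 ^ (2*q-1) * C) * ∑' k : ℤ, (F (k-1)) ^ (q / p) := by
          rw [ENNReal.tsum_mul_left]
      _ = ENNReal.ofReal (2 ^ (2*q-1) * C) * ∑' k : ℤ, (F k) ^ (q / p) := by
          congr 1
          exact (Equiv.subRight (1:ℤ)).tsum_eq (fun k => (F k) ^ (q / p))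
      _ ≤ ENNReal.ofReal (2 ^ (2*q-1) * C) * (∑' k : ℤ, F k) ^ (q / p) :=
          mul_le_mul_right (tsum_rpow_le_rpow_tsum' F hr1) _
      _ ≤ ENNReal.ofReal (2 ^ (2*q-1) * C) * (E u) ^ (q / p) :=
          mul_le_mul_right (ENNReal.rpow_le_rpow hsub' hr0) _
  calc ENNReal.ofReal q * ∫⁻ t in Set.Ioi (0:ℝ), μ {a | t ≤ u a} * ENNReal.ofReal (t ^ (q-1))
      ≤ ENNReal.ofReal q * (ENNReal.ofReal (2 ^ (2*q-1) * C) * (E u) ^ (q / p)) :=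
        mul_le_mul_right (le_trans step1 step2) _
    _ = ENNReal.ofReal (q * 2 ^ ((2 * n * p + p - n) / (n - p)) * C) * (E u) ^ (q / p) := by
        rw [show (2 * n * p + p - n) / (n - p) = 2*q-1 by
          rw [hq]; field_simp; ring]
        rw [← mul_assoc, ← ENNReal.ofReal_mul (by positivity)]
        congr 2
        ring
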